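/- Consider two workers with data points x₁ = (100, 1) and x₂ = (−100, 1) in ℝ², local losses F_n(w) = log(1 + exp(−⟨w, x_n⟩)), aggregation weights 1/2, learning rate η > 0, and initial model w⁰ = (0, 1). Let c = e^{−1}/(1 + e^{−1}). The workers run Top-1 sparsified gradient descent with error accumulation: ε_n⁰ = 0; at each iteration t, a_n^t = ε_n^t + ∇F_n(w^t), the mask s_n^t selects the single entry of a_n^t of largest absolute value, ĝ_n^t = s_n^t ⊙ a_n^t, ε_n^{t+1} = a_n^t − ĝ_n^t, the server aggregates g^t = (ĝ_1^t + ĝ_2^t)/2, and w^{t+1} = w^t − η g^t. Then for all 0 ≤ t ≤ 98: w^t = (0, 1), ∇F_1(w^t) = −c·(100, 1) and ∇F_2(w^t) = −c·(−100, 1), the first entry of a_n^t strictly dominates the second in absolute value for both workers (|a_n^t[1]| = 100c > (t+1)c = |a_n^t[2]|), the aggregated sparsified gradient satisfies g^t = 0, and ε_n^{t+1} = (0, −(t+1)c). Consequently w^t = (0, 1) and F(w^t) = log(1 + e^{−1}) for all 0 ≤ t ≤ 99, where F = (F_1 + F_2)/2. -/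
import Mathlib


/-- The toy example: with data points `x₁ = (100, 1)`, `x₂ = (-100, 1)`, logistic losses,
learning rate `η > 0` and initialization `w⁰ = (0, 1)`, Top-1 sparsified gradient descent
with error accumulation stalls: for `t ≤ 98` the model stays at `(0,1)`, the local gradients
are `∓c·(±100, 1)`, the first coordinate of each accumulated gradient strictly dominates,
the aggregated sparsified gradient vanishes, and the error grows linearly in the second
coordinate; consequently `w^t = (0,1)` and `F(w^t) = log(1 + e⁻¹)` for all `t ≤ 99`. -/
theorem stmt5 (η : ℝ) (hη : 0 < η)
    (x : Fin 2 → Fin 2 → ℝ) (hx0 : x 0 = ![100, 1]) (hx1 : x 1 = ![-100, 1])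
    (c : ℝ) (hc : c = Real.exp (-1) / (1 + Real.exp (-1)))
    (gradF : Fin 2 → (Fin 2 → ℝ) → (Fin 2 → ℝ))
    (hgrad : ∀ n w, gradF n w =
      -(Real.exp (-∑ i, w i * x n i) / (1 + Real.exp (-∑ i, w i * x n i))) • x n)
    (F : (Fin 2 → ℝ) → ℝ)
    (hF : ∀ w, F w = (Real.log (1 + Real.exp (-∑ i, w i * x 0 i))
                    + Real.log (1 + Real.exp (-∑ i, w i * x 1 i))) / 2)
    (w : ℕ → Fin 2 → ℝ) (g : ℕ → Fin 2 → ℝ)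
    (a eps ghat s : Fin 2 → ℕ → Fin 2 → ℝ)
    (hw0 : w 0 = ![0, 1])
    (heps0 : ∀ n, eps n 0 = 0)
    (ha : ∀ n t, a n t = eps n t + gradF n (w t))
    (hs01 : ∀ n t i, s n t i = 0 ∨ s n t i = 1)
    (hsone : ∀ n t, ∑ i, s n t i = 1)
    (hstop : ∀ n t i, s n t i = 1 → ∀ i', |a n t i'| ≤ |a n t i|)
    (hghat : ∀ n t, ghat n t = fun i => s n t i * a n t i)
    (hepsrec : ∀ n t, eps n (t + 1) = a n t - ghat n t)
    (hg : ∀ t, g t = (2⁻¹ : ℝ) • (ghat 0 t + ghat 1 t))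
    (hwrec : ∀ t, w (t + 1) = w t - η • g t) :
    (∀ t : ℕ, t ≤ 98 →
      w t = ![0, 1] ∧
      gradF 0 (w t) = (-c) • ![(100 : ℝ), 1] ∧
      gradF 1 (w t) = (-c) • ![(-100 : ℝ), 1] ∧
      (∀ n, |a n t 0| = 100 * c ∧ |a n t 1| = ((t : ℝ) + 1) * c ∧
        ((t : ℝ) + 1) * c < 100 * c) ∧
      g t = 0 ∧
      (∀ n, eps n (t + 1) = ![0, -(((t : ℝ) + 1) * c)])) ∧
    (∀ t : ℕ, t ≤ 99 →
      w t = ![0, 1] ∧ F (w t) = Real.log (1 + Real.exp (-1))) := by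
  have hcpos : 0 < c := by
    rw [hc]; positivity
  have hsum : ∀ n : Fin 2, ∑ i, (![0, 1] : Fin 2 → ℝ) i * x n i = 1 := by
    intro n
    fin_cases n <;> simp [hx0, hx1, Fin.sum_univ_two]
  have hgrad0 : gradF 0 ![0, 1] = (-c) • ![(100 : ℝ), 1] := by
    rw [hgrad, hsum 0, hx0, hc]
  have hgrad1 : gradF 1 ![0, 1] = (-c) • ![(-100 : ℝ), 1] := by
    rw [hgrad, hsum 1, hx1, hc]
  -- the main step lemma
  have step : ∀ t : ℕ, t ≤ 98 → w t = ![0, 1] →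
      (∀ n, eps n t = ![0, -((t : ℝ) * c)]) →
      gradF 0 (w t) = (-c) • ![(100 : ℝ), 1] ∧
      gradF 1 (w t) = (-c) • ![(-100 : ℝ), 1] ∧
      (∀ n, |a n t 0| = 100 * c ∧ |a n t 1| = ((t : ℝ) + 1) * c ∧
        ((t : ℝ) + 1) * c < 100 * c) ∧
      g t = 0 ∧
      (∀ n, eps n (t + 1) = ![0, -(((t : ℝ) + 1) * c)]) ∧
      w (t + 1) = ![0, 1] := by
    intro t ht hwt hepst
    have hg0 : gradF 0 (w t) = (-c) • ![(100 : ℝ), 1] := by rw [hwt]; exact hgrad0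
    have hg1 : gradF 1 (w t) = (-c) • ![(-100 : ℝ), 1] := by rw [hwt]; exact hgrad1
    have ha00 : a 0 t 0 = -(100 * c) := by
      have h := congrFun (ha 0 t) 0
      rw [hepst 0, hg0] at h
      simp at h
      rw [h]; ring
    have ha10 : a 1 t 0 = 100 * c := by
      have h := congrFun (ha 1 t) 0
      rw [hepst 1, hg1] at h
      simp at h
      rw [h]; ring
    have hcase : ∀ n : Fin 2, n = 0 ∨ n = 1 := by decide
    have ha1 : ∀ n, a n t 1 = -(((t : ℝ) + 1) * c) := by
      intro n
      have h := congrFun (ha n t) 1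
      rcases hcase n with rfl | rfl
      · rw [hepst 0, hg0] at h; simp at h; rw [h]; ring
      · rw [hepst 1, hg1] at h; simp at h; rw [h]; ring
    have ht' : (t : ℝ) ≤ 98 := by exact_mod_cast ht
    have hlt : ((t : ℝ) + 1) * c < 100 * c := by nlinarith
    have habs0 : ∀ n, |a n t 0| = 100 * c := by
      intro n
      rcases hcase n with rfl | rfl
      · rw [ha00, abs_neg, abs_of_nonneg (by positivity)]
      · rw [ha10, abs_of_nonneg (by positivity)]
    have habs1 : ∀ n, |a n t 1| = ((t : ℝ) + 1) * c := by
      intro n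
      rw [ha1 n, abs_neg, abs_of_nonneg (by positivity)]
    have hs1 : ∀ n, s n t 1 = 0 := by
      intro n
      rcases hs01 n t 1 with h | h
      · exact h
      · exfalso
        have h2 := hstop n t 1 h 0
        rw [habs0 n, habs1 n] at h2
        linarith
    have hs0 : ∀ n, s n t 0 = 1 := by
      intro n
      have h := hsone n t
      rw [Fin.sum_univ_two, hs1 n] at h
      linarith
    have hghat0 : ∀ n, ghat n t 0 = a n t 0 := by
      intro n; simp only [hghat]; rw [hs0 n]; ring
    have hghat1 : ∀ n, ghat n t 1 = 0 := by
      intro n; simp only [hghat]; rw [hs1 n]; ring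
    have hgt : g t = 0 := by
      funext i
      rw [hg]
      fin_cases i
      · simp [Pi.add_apply, hghat0, ha00, ha10]
      · simp [Pi.add_apply, hghat1]
    have hepsn : ∀ n, eps n (t + 1) = ![0, -(((t : ℝ) + 1) * c)] := by
      intro n
      rw [hepsrec]
      funext i
      fin_cases i
      · simp [hghat0]
      · simp [hghat1, ha1 n]
    have hwn : w (t + 1) = ![0, 1] := by
      rw [hwrec, hgt, smul_zero, sub_zero, hwt]
    exact ⟨hg0, hg1, fun n => ⟨habs0 n, habs1 n, hlt⟩, hgt, hepsn, hwn⟩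
  -- the invariant up to 99
  have inv : ∀ t : ℕ, t ≤ 99 → w t = ![0, 1] ∧ ∀ n, eps n t = ![0, -((t : ℝ) * c)] := by
    intro t
    induction t with
    | zero =>
      intro _
      refine ⟨hw0, fun n => ?_⟩
      rw [heps0]
      funext i
      fin_cases i <;> simp
    | succ t ih =>
      intro ht
      obtain ⟨hwt, hepst⟩ := ih (by omega)
      obtain ⟨_, _, _, _, hepsn, hwn⟩ := step t (by omega) hwt hepst
      refine ⟨hwn, fun n => ?_⟩
      rw [hepsn n]
      push_cast
      ring_nf
  constructor
  · intro t ht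
    obtain ⟨hwt, hepst⟩ := inv t (by omega)
    obtain ⟨hg0, hg1, habs, hgt, hepsn, _⟩ := step t ht hwt hepst
    exact ⟨hwt, hg0, hg1, habs, hgt, hepsn⟩
  · intro t ht
    obtain ⟨hwt, _⟩ := inv t ht
    refine ⟨hwt, ?_⟩
    rw [hF, hwt, hsum 0, hsum 1]
    ring
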